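/- Let F_{n,1} be the n×n matrix with entries F(i,j) = -1 if i = j+1, F(i,j) = 1 if j ≥ i, and F(i,j) = 0 otherwise. Then det(F_{n,1}) = 2^(n-1). -/

import Mathlib

/-- The `n × n` Hessenberg matrix `F_{n,1}` with entries `-1` when `i = j + 1`,
`1` when `j ≥ i`, and `0` otherwise. -/
def F1 (n : ℕ) : Matrix (Fin n) (Fin n) ℤ := fun i j =>
  if (i : ℕ) = (j : ℕ) + 1 then -1
  else if (i : ℕ) ≤ (j : ℕ) then 1
  else 0

lemma F1_sub0 (n : ℕ) :
    (F1 (n+1+1)).submatrix (Fin.succAbove 0) Fin.succ = F1 (n+1) := by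
  ext i j
  simp [F1, Matrix.submatrix, Fin.succAbove, Fin.succ]

lemma F1_sub1 (n : ℕ) :
    (F1 (n+1+1)).submatrix (Fin.succAbove 1) Fin.succ = F1 (n+1) := by
  ext i j
  simp only [Matrix.submatrix_apply, F1, Fin.succAbove]
  have hc : ((Fin.castSucc i : Fin (n+2)) : ℕ) = (i : ℕ) := rfl
  have hs : ((Fin.succ i : Fin (n+2)) : ℕ) = (i : ℕ) + 1 := rfl
  have hj : (i : ℕ) ≤ n ∧ (j : ℕ) ≤ n := ⟨Nat.lt_succ_iff.mp i.isLt, Nat.lt_succ_iff.mp j.isLt⟩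
  by_cases h : i.castSucc < 1
  · have hi : (i : ℕ) = 0 := by simpa [Fin.lt_def, hc] using h
    simp [h, hc, hi]
  · have hi : 1 ≤ (i : ℕ) := by by_contra hne; apply h; rw [Fin.lt_def, hc, Fin.val_one]; omega
    simp only [h, if_false, hs]
    split_ifs <;> simp_all <;> omega

lemma F1_det_aux (n : ℕ) : (F1 (n+1)).det = 2 ^ n := by
  induction n with
  | zero => simp [Matrix.det_fin_one, F1]
  | succ m ih =>
    rw [Matrix.det_succ_column_zero, Fin.sum_univ_succ, Fin.sum_univ_succ]
    have h0 : F1 (m+1+1) 0 0 = 1 := by simp [F1]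
    have h1 : F1 (m+1+1) 1 0 = -1 := by simp [F1]
    have hz : ∀ i : Fin m, F1 (m+1+1) i.succ.succ 0 = 0 := by
      intro i
      have : ((i.succ.succ : Fin (m+2)) : ℕ) = (i : ℕ) + 2 := rfl
      simp [F1, this]
    simp only [Fin.succ_zero_eq_one, h0, h1, hz, F1_sub0, F1_sub1, ih]
    simp
    ring

/-- `det F_{n,1} = 2^(n-1)`. -/
theorem stmt13 (n : ℕ) (hn : 0 < n) : (F1 n).det = 2 ^ (n - 1) := by
  obtain ⟨m, rfl⟩ : ∃ m, n = m + 1 := ⟨n - 1, by omega⟩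
  simpa using F1_det_aux m
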